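/- (Lipschitz continuity of the scheme for the pure degenerate equation.) Let d ≥ 1, 0 < λ ≤ Λ, h > 0, ε ∈ (0,1), θ ≥ 1 and K_f ≥ 0. Fix a grid Ω̄_h = Ω_h ∪ ∂Ω_h, Isaacs data with ellipticity constants (λ,Λ), f : Ω_h → ℝ with |f(x)| ≤ K_f for all x ∈ Ω_h, and g : ∂Ω_h → ℝ, and let G_h be the associated scheme. Then there exists a constant C > 0 depending only on d, Λ, ε, h, θ and K_f such that for all grid functions u, v : Ω̄_h → ℝ, max_{x ∈ Ω̄_h} |G_h(u, x) − G_h(v, x)| ≤ C max_{x ∈ Ω̄_h} |u(x) − v(x)|. -/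

import Mathlib

open scoped BigOperators
open MeasureTheory
open scoped Classical

noncomputable section

namespace Paper

/-- `ℝᵈ` with the Euclidean structure. -/
abbrev E (d : ℕ) := EuclideanSpace ℝ (Fin d)

/-- The standard basis vector `eᵢ` of `ℝᵈ`. -/
def e (d : ℕ) (i : Fin d) : E d := EuclideanSpace.single i 1

/-- For a symmetric matrix, the maximum of the absolute values of its eigenvalues. -/
def specNorm {d : ℕ} (M : Matrix (Fin d) (Fin d) ℝ) : ℝ :=
  if h : M.IsHermitian then ⨆ i, |h.eigenvalues i| else 0

/-- `(λ,Λ)`-uniform ellipticity of `F : S(d) → ℝ`. -/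
def UniformlyElliptic (d : ℕ) (lam Lam : ℝ) (F : Matrix (Fin d) (Fin d) ℝ → ℝ) : Prop :=
  ∀ M N : Matrix (Fin d) (Fin d) ℝ, M.IsHermitian → N.PosSemidef →
    lam * specNorm N ≤ F M - F (M + N) ∧ F M - F (M + N) ≤ Lam * specNorm N

/-- The upwind discretisation `|D_h u (x)|²`. -/
def upwindSq (d : ℕ) (h : ℝ) (u : E d → ℝ) (x : E d) : ℝ :=
  (1 / h ^ 2) * ∑ i : Fin d,
    max (max (u x - u (x + h • e d i)) (u x - u (x - h • e d i))) 0 ^ 2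

/-- The monotone discretisation `L_h^A u (x)` of `Tr (A D²u)`. -/
def Lh (d : ℕ) (h : ℝ) (A : Matrix (Fin d) (Fin d) ℝ) (u : E d → ℝ) (x : E d) : ℝ :=
  (∑ i : Fin d, (A i i - ∑ j ∈ Finset.univ.erase i, |A i j|) *
      ((u (x + h • e d i) + u (x - h • e d i) - 2 * u x) / h ^ 2)) +
  ∑ i : Fin d, ∑ j ∈ Finset.univ.filter (fun j => i < j),
    (max (A i j) 0 *
        ((u (x + h • (e d i + e d j)) + u (x - h • (e d i + e d j)) - 2 * u x) / h ^ 2) +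
      max (-A i j) 0 *
        ((u (x + h • (e d i - e d j)) + u (x - h • (e d i - e d j)) - 2 * u x) / h ^ 2))

/-- Diagonal dominance of a matrix. -/
def DiagDominant {d : ℕ} (A : Matrix (Fin d) (Fin d) ℝ) : Prop :=
  ∀ i, ∑ j ∈ Finset.univ.erase i, |A i j| ≤ A i i

/-- Isaacs data with ellipticity constants `(λ, Λ)`: symmetric, diagonally dominant matrices
with `λ I ≤ A_{α,β} ≤ Λ I`. -/
def IsaacsData (d : ℕ) {ιA ιB : Type*} (lam Lam : ℝ)
    (A : ιA → ιB → Matrix (Fin d) (Fin d) ℝ) : Prop :=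
  ∀ a b, (A a b).IsHermitian ∧ DiagDominant (A a b) ∧
    (A a b - lam • (1 : Matrix (Fin d) (Fin d) ℝ)).PosSemidef ∧
    (Lam • (1 : Matrix (Fin d) (Fin d) ℝ) - A a b).PosSemidef

/-- Discretised Isaacs operator. -/
def Fh (d : ℕ) {ιA ιB : Type*} (h : ℝ) (A : ιA → ιB → Matrix (Fin d) (Fin d) ℝ)
    (u : E d → ℝ) (x : E d) : ℝ :=
  ⨆ a : ιA, ⨅ b : ιB, -(Lh d h (A a b) u x)

/-- A finite grid `Ω̄_h = Ω_h ∪ ∂Ω_h` whose interior points have all stencil points in the grid. -/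
structure Grid (d : ℕ) (h : ℝ) where
  interior : Finset (E d)
  boundary : Finset (E d)
  disj : Disjoint interior boundary
  nonempty : (interior ∪ boundary).Nonempty
  stencil_ax : ∀ x ∈ interior, ∀ i : Fin d,
    x + h • e d i ∈ interior ∪ boundary ∧ x - h • e d i ∈ interior ∪ boundary
  stencil_diag : ∀ x ∈ interior, ∀ i j : Fin d, i < j →
    x + h • (e d i + e d j) ∈ interior ∪ boundary ∧
    x - h • (e d i + e d j) ∈ interior ∪ boundary ∧
    x + h • (e d i - e d j) ∈ interior ∪ boundary ∧
    x - h • (e d i - e d j) ∈ interior ∪ boundary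

/-- The finite difference scheme `G_h` for the regularised pure degenerate equation. -/
def scheme (d : ℕ) {ιA ιB : Type*} {h : ℝ} (ε θ : ℝ)
    (A : ιA → ιB → Matrix (Fin d) (Fin d) ℝ) (G : Grid d h)
    (f g : E d → ℝ) (u : E d → ℝ) (x : E d) : ℝ :=
  if x ∈ G.interior then
    ε * u x + Fh d h A u x - f x / (ε + upwindSq d h u x) ^ (θ / 2)
  else u x - g x

/-- The finite difference scheme `G_h` for the regularised free transmission problem. -/
def schemeT (d : ℕ) {ιA ιB : Type*} {h : ℝ} (ε : ℝ) (θe : ℝ → ℝ)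
    (A : ιA → ιB → Matrix (Fin d) (Fin d) ℝ) (G : Grid d h)
    (f g : E d → ℝ) (u : E d → ℝ) (x : E d) : ℝ :=
  if x ∈ G.interior then
    ε * u x + Fh d h A u x - f x / (ε + upwindSq d h u x) ^ (θe (u x) / 2)
  else u x - g x

/-- The properties of the regularised degeneracy exponent `θ_ε` used in the transmission scheme. -/
def ThetaInterp (ε θ₁ θ₂ : ℝ) (θe : ℝ → ℝ) : Prop :=
  Monotone θe ∧ (∀ t, θ₁ ≤ θe t ∧ θe t ≤ θ₂) ∧
    (∀ t, t ≤ -ε → θe t = θ₁) ∧ (∀ t, ε ≤ t → θe t = θ₂)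

/-- The Hessian matrix of `φ : ℝᵈ → ℝ` at `x`. -/
def hessianMatrix (d : ℕ) (φ : E d → ℝ) (x : E d) : Matrix (Fin d) (Fin d) ℝ :=
  Matrix.of fun i j => fderiv ℝ (fun y => fderiv ℝ φ y (e d j)) x (e d i)

/-- The piecewise-linear interpolation `Θ_ε` between the degeneracy rates `θ₁` and `θ₂`. -/
def ThetaStep (θ₁ θ₂ ε t : ℝ) : ℝ :=
  if t ≤ -ε then θ₁
  else if t < ε then (θ₂ - θ₁) / (2 * ε) * t + (θ₁ + θ₂) / 2
  else θ₂


/-! ### Auxiliary lemmas for Statement 10 -/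

section Aux

lemma aux_rpow_neg_lip_one_side {θ c a b : ℝ} (hθ : 1 ≤ θ) (hc : 0 < c) (ha : c ≤ a)
    (hb : c ≤ b) : a ^ (-θ) - b ^ (-θ) ≤ θ * c ^ (-θ - 1) * |b - a| := by
  rcases le_or_gt a b with hab | hab
  case inr =>
    have : a ^ (-θ) ≤ b ^ (-θ) :=
      Real.rpow_le_rpow_of_nonpos (lt_of_lt_of_le hc hb) hab.le (by linarith)
    have h0 : 0 ≤ θ * c ^ (-θ - 1) * |b - a| := by
      have := Real.rpow_pos_of_pos hc (-θ - 1)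
      positivity
    linarith
  have ha0 : 0 < a := lt_of_lt_of_le hc ha
  have hb0 : 0 < b := lt_of_lt_of_le hc hb
  have habs : |b - a| = b - a := abs_of_nonneg (by linarith)
  rw [habs]
  have hber : 1 + θ * (a / b - 1) ≤ (a / b) ^ θ := by
    have := one_add_mul_self_le_rpow_one_add (s := a / b - 1)
      (by nlinarith [div_nonneg ha0.le hb0.le] : (-1:ℝ) ≤ a / b - 1) hθ
    simpa using this
  have hkey : a ^ (-θ) * (a / b) ^ θ = b ^ (-θ) := by
    rw [Real.div_rpow ha0.le hb0.le, Real.rpow_neg ha0.le, Real.rpow_neg hb0.le]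
    field_simp
  have hbθ : (0:ℝ) < a ^ (-θ) := Real.rpow_pos_of_pos ha0 _
  have h1 : a ^ (-θ) - b ^ (-θ) ≤ a ^ (-θ) * (θ * ((b - a) / b)) := by
    rw [← hkey]
    have h2 : 1 - (a / b) ^ θ ≤ θ * ((b - a) / b) := by
      have h3 : θ * ((b-a)/b) = -(θ * (a/b - 1)) := by field_simp; ring
      linarith
    nlinarith [h2, hbθ.le]
  have haθ : a ^ (-θ) ≤ c ^ (-θ) := Real.rpow_le_rpow_of_nonpos hc ha (by linarith)
  have hcb : (b - a) / b ≤ (b - a) / c :=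
    div_le_div_of_nonneg_left (by linarith) hc hb
  have hfin : a ^ (-θ) * (θ * ((b - a) / b)) ≤ c ^ (-θ) * (θ * ((b - a) / c)) := by
    have h4 : 0 ≤ θ * ((b - a) / b) :=
      mul_nonneg (by linarith) (div_nonneg (by linarith) hb0.le)
    have h5 : θ * ((b - a) / b) ≤ θ * ((b - a) / c) :=
      mul_le_mul_of_nonneg_left hcb (by linarith)
    nlinarith [Real.rpow_pos_of_pos hc (-θ)]
  have hsplit : c ^ (-θ - 1) = c ^ (-θ) * c⁻¹ := by
    rw [show -θ - 1 = -θ + (-1) by ring, Real.rpow_add hc, Real.rpow_neg_one]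
  calc a ^ (-θ) - b ^ (-θ) ≤ a ^ (-θ) * (θ * ((b - a) / b)) := h1
    _ ≤ c ^ (-θ) * (θ * ((b - a) / c)) := hfin
    _ = θ * c ^ (-θ - 1) * (b - a) := by rw [hsplit]; field_simp

lemma aux_rpow_neg_lip {θ c a b : ℝ} (hθ : 1 ≤ θ) (hc : 0 < c) (ha : c ≤ a) (hb : c ≤ b) :
    |a ^ (-θ) - b ^ (-θ)| ≤ θ * c ^ (-θ - 1) * |a - b| := by
  rw [abs_sub_le_iff]
  constructor
  · rw [show |a - b| = |b - a| by rw [abs_sub_comm]]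
    exact aux_rpow_neg_lip_one_side hθ hc ha hb
  · rw [show |a - b| = |b - a| by rw [abs_sub_comm], abs_sub_comm b a]
    exact aux_rpow_neg_lip_one_side hθ hc hb ha

lemma aux_supinf_le {ιA ιB : Type} [Nonempty ιA] [Nonempty ιB]
    (p q : ιA → ιB → ℝ) (c B : ℝ) (hc : ∀ a b, p a b - q a b ≤ c)
    (hp : ∀ a b, |p a b| ≤ B) (hq : ∀ a b, |q a b| ≤ B) :
    (⨆ a, ⨅ b, p a b) ≤ (⨆ a, ⨅ b, q a b) + c := by
  apply ciSup_le
  intro a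
  have hbddq : ∀ a, BddBelow (Set.range (q a)) :=
    fun a => ⟨-B, fun y ⟨b, hb⟩ => hb ▸ (abs_le.mp (hq a b)).1⟩
  have hbddp : BddBelow (Set.range (p a)) :=
    ⟨-B, fun y ⟨b, hb⟩ => hb ▸ (abs_le.mp (hp a b)).1⟩
  have h1 : (⨅ b, p a b) - c ≤ ⨅ b, q a b := by
    apply le_ciInf
    intro b
    have := ciInf_le hbddp b
    linarith [hc a b]
  have h2 : (⨅ b, q a b) ≤ ⨆ a, ⨅ b, q a b := by
    apply le_ciSup (f := fun a => ⨅ b, q a b)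
    refine ⟨B, fun y ⟨a', ha'⟩ => ?_⟩
    subst ha'
    exact le_trans (ciInf_le (hbddq a') (Classical.arbitrary ιB))
      (abs_le.mp (hq a' _)).2
  linarith

lemma aux_supinf_lipschitz {ιA ιB : Type} [Nonempty ιA] [Nonempty ιB]
    (p q : ιA → ιB → ℝ) (c B : ℝ) (hc : ∀ a b, |p a b - q a b| ≤ c)
    (hp : ∀ a b, |p a b| ≤ B) (hq : ∀ a b, |q a b| ≤ B) :
    |(⨆ a, ⨅ b, p a b) - (⨆ a, ⨅ b, q a b)| ≤ c := by
  rw [abs_sub_le_iff]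
  constructor
  · linarith [aux_supinf_le p q c B (fun a b => (abs_le.mp (hc a b)).2) hp hq]
  · linarith [aux_supinf_le q p c B (fun a b => by
      have := (abs_le.mp (hc a b)).1; linarith) hq hp]

lemma diag_le_of_psd {d : ℕ} {A : Matrix (Fin d) (Fin d) ℝ} {Lam : ℝ}
    (h : (Lam • (1 : Matrix (Fin d) (Fin d) ℝ) - A).PosSemidef) (i : Fin d) :
    A i i ≤ Lam := by
  have h2 := h.dotProduct_mulVec_nonneg (Pi.single i 1)
  simp [Matrix.sub_mulVec, Matrix.smul_mulVec, Matrix.one_mulVec,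
    Matrix.mulVec_single, dotProduct, Pi.single_apply] at h2
  linarith

lemma Lh_sub {d : ℕ} (h : ℝ) (A : Matrix (Fin d) (Fin d) ℝ) (u v : E d → ℝ) (x : E d) :
    Lh d h A u x - Lh d h A v x = Lh d h A (fun y => u y - v y) x := by
  unfold Lh
  simp only
  rw [add_sub_add_comm, ← Finset.sum_sub_distrib, ← Finset.sum_sub_distrib]
  congr 1
  · apply Finset.sum_congr rfl; intro i _; ring
  · apply Finset.sum_congr rfl; intro i _
    rw [← Finset.sum_sub_distrib]
    apply Finset.sum_congr rfl; intro j _; ring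

lemma Lh_bound {d : ℕ} {h Lam M : ℝ} (hh : 0 < h) (hLam : 0 ≤ Lam)
    {A : Matrix (Fin d) (Fin d) ℝ} (hdd : DiagDominant A) (hdiag : ∀ i, A i i ≤ Lam)
    {w : E d → ℝ} {x : E d}
    (hMx : |w x| ≤ M)
    (hM1 : ∀ i : Fin d, |w (x + h • e d i)| ≤ M ∧ |w (x - h • e d i)| ≤ M)
    (hM2 : ∀ i j : Fin d, i < j →
      |w (x + h • (e d i + e d j))| ≤ M ∧ |w (x - h • (e d i + e d j))| ≤ M ∧
      |w (x + h • (e d i - e d j))| ≤ M ∧ |w (x - h • (e d i - e d j))| ≤ M) :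
    |Lh d h A w x| ≤ (d + 2 * d ^ 2) * (Lam * (4 * M / h ^ 2)) := by
  have hM0 : 0 ≤ M := le_trans (abs_nonneg _) hMx
  have hh2 : (0:ℝ) < h ^ 2 := by positivity
  have hdiff : ∀ a b : ℝ, |a| ≤ M → |b| ≤ M → |(a + b - 2 * w x) / h ^ 2| ≤ 4 * M / h ^ 2 := by
    intro a b ha hb
    rw [abs_div, abs_of_pos hh2]
    gcongr
    have h1 := abs_le.mp ha; have h2 := abs_le.mp hb; have h3 := abs_le.mp hMx
    rw [abs_le]; constructor <;> linarith
  have hc1 : ∀ i : Fin d, abs (A i i - ∑ j ∈ Finset.univ.erase i, |A i j|) ≤ Lam := by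
    intro i
    rw [abs_of_nonneg (by linarith [hdd i])]
    have : (0:ℝ) ≤ ∑ j ∈ Finset.univ.erase i, |A i j| :=
      Finset.sum_nonneg fun j _ => abs_nonneg _
    linarith [hdiag i]
  have hcoff : ∀ i j : Fin d, i < j → |A i j| ≤ Lam := by
    intro i j hij
    calc |A i j| ≤ ∑ k ∈ Finset.univ.erase i, |A i k| :=
          Finset.single_le_sum (fun k _ => abs_nonneg (A i k))
            (Finset.mem_erase.mpr ⟨hij.ne', Finset.mem_univ j⟩)
      _ ≤ A i i := hdd i
      _ ≤ Lam := hdiag i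
  set c : ℝ := Lam * (4 * M / h ^ 2) with hc
  have hc0 : 0 ≤ c := by positivity
  unfold Lh
  have hS1 : abs (∑ i : Fin d, (A i i - ∑ j ∈ Finset.univ.erase i, |A i j|) *
      ((w (x + h • e d i) + w (x - h • e d i) - 2 * w x) / h ^ 2)) ≤ d * c := by
    calc _ ≤ ∑ i : Fin d, abs ((A i i - ∑ j ∈ Finset.univ.erase i, |A i j|) *
          ((w (x + h • e d i) + w (x - h • e d i) - 2 * w x) / h ^ 2)) :=
        Finset.abs_sum_le_sum_abs _ _
      _ ≤ ∑ _i : Fin d, c := by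
          apply Finset.sum_le_sum
          intro i _
          rw [abs_mul, hc]
          exact mul_le_mul (hc1 i) (hdiff _ _ (hM1 i).1 (hM1 i).2) (abs_nonneg _) hLam
      _ = d * c := by simp [mul_comm]
  have hS2 : |∑ i : Fin d, ∑ j ∈ Finset.univ.filter (fun j => i < j),
      (max (A i j) 0 *
        ((w (x + h • (e d i + e d j)) + w (x - h • (e d i + e d j)) - 2 * w x) / h ^ 2) +
      max (-A i j) 0 *
        ((w (x + h • (e d i - e d j)) + w (x - h • (e d i - e d j)) - 2 * w x) / h ^ 2))|
      ≤ (d * d) * (2 * c) := by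
    calc _ ≤ ∑ i : Fin d, |∑ j ∈ Finset.univ.filter (fun j => i < j),
        (max (A i j) 0 *
          ((w (x + h • (e d i + e d j)) + w (x - h • (e d i + e d j)) - 2 * w x) / h ^ 2) +
        max (-A i j) 0 *
          ((w (x + h • (e d i - e d j)) + w (x - h • (e d i - e d j)) - 2 * w x) / h ^ 2))| :=
        Finset.abs_sum_le_sum_abs _ _
      _ ≤ ∑ _i : Fin d, d * (2 * c) := by
          apply Finset.sum_le_sum
          intro i _
          calc _ ≤ ∑ j ∈ Finset.univ.filter (fun j => i < j),
              |max (A i j) 0 *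
                ((w (x + h • (e d i + e d j)) + w (x - h • (e d i + e d j)) - 2 * w x) / h ^ 2) +
              max (-A i j) 0 *
                ((w (x + h • (e d i - e d j)) + w (x - h • (e d i - e d j)) - 2 * w x) / h ^ 2)| :=
              Finset.abs_sum_le_sum_abs _ _
            _ ≤ ∑ _j ∈ Finset.univ.filter (fun j => i < j), 2 * c := by
                apply Finset.sum_le_sum
                intro j hj
                have hij : i < j := (Finset.mem_filter.mp hj).2
                have h2 := hM2 i j hij
                have hA1 : |max (A i j) 0| ≤ Lam := by
                  rw [abs_of_nonneg (le_max_right _ _)]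
                  exact max_le (le_trans (le_abs_self _) (hcoff i j hij)) hLam
                have hA2 : |max (-A i j) 0| ≤ Lam := by
                  rw [abs_of_nonneg (le_max_right _ _)]
                  refine max_le (le_trans (le_abs_self _) ?_) hLam
                  rw [abs_neg]; exact hcoff i j hij
                calc _ ≤ |max (A i j) 0 *
                    ((w (x + h • (e d i + e d j)) + w (x - h • (e d i + e d j)) - 2 * w x) / h ^ 2)| +
                    |max (-A i j) 0 *
                    ((w (x + h • (e d i - e d j)) + w (x - h • (e d i - e d j)) - 2 * w x) / h ^ 2)| :=
                    abs_add_le _ _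
                  _ ≤ c + c := by
                      apply add_le_add
                      · rw [abs_mul, hc]
                        exact mul_le_mul hA1 (hdiff _ _ h2.1 h2.2.1) (abs_nonneg _) hLam
                      · rw [abs_mul, hc]
                        exact mul_le_mul hA2 (hdiff _ _ h2.2.2.1 h2.2.2.2) (abs_nonneg _) hLam
                  _ = 2 * c := by ring
            _ ≤ d * (2 * c) := by
                rw [Finset.sum_const, nsmul_eq_mul]
                have hcard : ((Finset.univ.filter (fun j => i < j)).card : ℝ) ≤ d := by
                  have := Finset.card_filter_le (Finset.univ : Finset (Fin d)) (fun j => i < j)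
                  simp only [Finset.card_univ, Fintype.card_fin] at this
                  exact_mod_cast this
                have h2c : (0:ℝ) ≤ 2 * c := by positivity
                nlinarith
      _ = (d * d) * (2 * c) := by simp; ring
  calc |_ + _| ≤ _ + _ := abs_add_le _ _
    _ ≤ d * c + (d * d) * (2 * c) := add_le_add hS1 hS2
    _ = (d + 2 * d ^ 2) * c := by push_cast; ring

lemma upwindSq_nonneg (d : ℕ) {h : ℝ} (hh : 0 < h) (u : E d → ℝ) (x : E d) :
    0 ≤ upwindSq d h u x := by
  unfold upwindSq
  apply mul_nonneg (by positivity)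
  exact Finset.sum_nonneg fun i _ => sq_nonneg _

lemma sqrt_upwind_lip {d : ℕ} {h ε M : ℝ} (hh : 0 < h) (hε : 0 < ε)
    (u v : E d → ℝ) (x : E d)
    (hMx : |u x - v x| ≤ M)
    (hM1 : ∀ i : Fin d, |u (x + h • e d i) - v (x + h • e d i)| ≤ M ∧
      |u (x - h • e d i) - v (x - h • e d i)| ≤ M) :
    |Real.sqrt (ε + upwindSq d h u x) - Real.sqrt (ε + upwindSq d h v x)| ≤ 2 * d * M / h := by
  have hM0 : 0 ≤ M := le_trans (abs_nonneg _) hMx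
  set m : Fin d → ℝ := fun i => max (max (u x - u (x + h • e d i)) (u x - u (x - h • e d i))) 0
    with hm
  set n : Fin d → ℝ := fun i => max (max (v x - v (x + h • e d i)) (v x - v (x - h • e d i))) 0
    with hn
  have hm0 : ∀ i, 0 ≤ m i := fun i => le_max_right _ _
  have hn0 : ∀ i, 0 ≤ n i := fun i => le_max_right _ _
  set α := Real.sqrt (ε + upwindSq d h u x) with hα
  set β := Real.sqrt (ε + upwindSq d h v x) with hβ
  have hsu : 0 ≤ upwindSq d h u x := upwindSq_nonneg d hh u x
  have hsv : 0 ≤ upwindSq d h v x := upwindSq_nonneg d hh v x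
  have hα0 : 0 < α := Real.sqrt_pos.mpr (by linarith)
  have hβ0 : 0 < β := Real.sqrt_pos.mpr (by linarith)
  have hα2 : α ^ 2 = ε + upwindSq d h u x := Real.sq_sqrt (by linarith)
  have hβ2 : β ^ 2 = ε + upwindSq d h v x := Real.sq_sqrt (by linarith)
  have hmα : ∀ i, m i ≤ h * α := by
    intro i
    have h2 : (m i) ^ 2 ≤ ∑ j : Fin d, (m j) ^ 2 :=
      Finset.single_le_sum (fun j _ => sq_nonneg (m j)) (Finset.mem_univ i)
    have h3 : upwindSq d h u x = (1 / h ^ 2) * ∑ j : Fin d, (m j) ^ 2 := rfl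
    have hh2 : (0:ℝ) < h ^ 2 := by positivity
    have h4 : (m i) ^ 2 ≤ (h * α) ^ 2 := by
      rw [mul_pow, hα2, h3]
      calc (m i)^2 ≤ ∑ j : Fin d, (m j)^2 := h2
        _ = h ^ 2 * ((1 / h^2) * ∑ j : Fin d, (m j)^2) := by field_simp
        _ ≤ h ^ 2 * (ε + (1 / h^2) * ∑ j : Fin d, (m j)^2) := by nlinarith
    have h5 : 0 ≤ h * α := by positivity
    nlinarith [hm0 i]
  have hnβ : ∀ i, n i ≤ h * β := by
    intro i
    have h2 : (n i) ^ 2 ≤ ∑ j : Fin d, (n j) ^ 2 :=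
      Finset.single_le_sum (fun j _ => sq_nonneg (n j)) (Finset.mem_univ i)
    have h3 : upwindSq d h v x = (1 / h ^ 2) * ∑ j : Fin d, (n j) ^ 2 := rfl
    have hh2 : (0:ℝ) < h ^ 2 := by positivity
    have h4 : (n i) ^ 2 ≤ (h * β) ^ 2 := by
      rw [mul_pow, hβ2, h3]
      calc (n i)^2 ≤ ∑ j : Fin d, (n j)^2 := h2
        _ = h ^ 2 * ((1 / h^2) * ∑ j : Fin d, (n j)^2) := by field_simp
        _ ≤ h ^ 2 * (ε + (1 / h^2) * ∑ j : Fin d, (n j)^2) := by nlinarith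
    have h5 : 0 ≤ h * β := by positivity
    nlinarith [hn0 i]
  have hmn : ∀ i, |m i - n i| ≤ 2 * M := by
    intro i
    have h1 := abs_max_sub_max_le_max (max (u x - u (x + h • e d i)) (u x - u (x - h • e d i)))
      0 (max (v x - v (x + h • e d i)) (v x - v (x - h • e d i))) 0
    have h2 := abs_max_sub_max_le_max (u x - u (x + h • e d i)) (u x - u (x - h • e d i))
      (v x - v (x + h • e d i)) (v x - v (x - h • e d i))
    have ha : |u x - u (x + h • e d i) - (v x - v (x + h • e d i))| ≤ 2 * M := by
      have h4 := (hM1 i).1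
      calc |u x - u (x + h • e d i) - (v x - v (x + h • e d i))|
          = |(u x - v x) - (u (x + h • e d i) - v (x + h • e d i))| := by ring_nf
        _ ≤ |u x - v x| + |u (x + h • e d i) - v (x + h • e d i)| := abs_sub _ _
        _ ≤ 2 * M := by linarith
    have hb : |u x - u (x - h • e d i) - (v x - v (x - h • e d i))| ≤ 2 * M := by
      have h4 := (hM1 i).2
      calc |u x - u (x - h • e d i) - (v x - v (x - h • e d i))|
          = |(u x - v x) - (u (x - h • e d i) - v (x - h • e d i))| := by ring_nf
        _ ≤ |u x - v x| + |u (x - h • e d i) - v (x - h • e d i)| := abs_sub _ _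
        _ ≤ 2 * M := by linarith
    have h3 : |m i - n i| ≤ max (|max (u x - u (x + h • e d i)) (u x - u (x - h • e d i)) -
        max (v x - v (x + h • e d i)) (v x - v (x - h • e d i))|) |0 - 0| := h1
    simp only [sub_self, abs_zero] at h3
    refine le_trans h3 (max_le (le_trans h2 (max_le ha hb)) (by linarith))
  have hterm : ∀ i : Fin d, |m i ^ 2 - n i ^ 2| ≤ 2 * M * (h * α + h * β) := by
    intro i
    have h1 : |m i ^ 2 - n i ^ 2| = |m i - n i| * (m i + n i) := by
      rw [← abs_of_nonneg (by positivity : 0 ≤ m i + n i), ← abs_mul]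
      · congr 1; ring
    rw [h1]
    exact mul_le_mul (hmn i) (add_le_add (hmα i) (hnβ i))
      (by positivity) (by linarith)
  have hαβ : 0 < α + β := by linarith
  have hh2 : (0:ℝ) < h ^ 2 := by positivity
  have h3u : upwindSq d h u x = (1 / h ^ 2) * ∑ j : Fin d, (m j) ^ 2 := rfl
  have h3v : upwindSq d h v x = (1 / h ^ 2) * ∑ j : Fin d, (n j) ^ 2 := rfl
  have hsub : α ^ 2 - β ^ 2 = (1 / h ^ 2) * ∑ j : Fin d, (m j ^ 2 - n j ^ 2) := by
    rw [hα2, hβ2, h3u, h3v, Finset.sum_sub_distrib]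
    ring
  have habs : |α ^ 2 - β ^ 2| ≤ (1 / h ^ 2) * (d * (2 * M * (h * α + h * β))) := by
    rw [hsub, abs_mul, abs_of_pos (by positivity : (0:ℝ) < 1 / h ^ 2)]
    apply mul_le_mul_of_nonneg_left ?_ (by positivity)
    calc |∑ j : Fin d, (m j ^ 2 - n j ^ 2)| ≤ ∑ j : Fin d, |m j ^ 2 - n j ^ 2| :=
        Finset.abs_sum_le_sum_abs _ _
      _ ≤ ∑ _j : Fin d, 2 * M * (h * α + h * β) := Finset.sum_le_sum fun j _ => hterm j
      _ = d * (2 * M * (h * α + h * β)) := by simp [mul_comm]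
  have e1 : |α - β| * (α + β) = |α ^ 2 - β ^ 2| := by
    rw [← abs_of_pos hαβ, ← abs_mul]
    congr 1; ring
  have e2 : (1 / h ^ 2) * (d * (2 * M * (h * α + h * β))) = (2 * d * M / h) * (α + β) := by
    field_simp
  have final : |α - β| * (α + β) ≤ (2 * d * M / h) * (α + β) := by
    rw [e1]; rw [e2] at habs; exact habs
  exact le_of_mul_le_mul_right final hαβ

lemma stencil_bound_spec (d : ℕ) (h : ℝ) (u : E d → ℝ) (x : E d) :
    ∃ S : ℝ, |u x| ≤ S ∧
      (∀ i : Fin d, |u (x + h • e d i)| ≤ S ∧ |u (x - h • e d i)| ≤ S) ∧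
      (∀ i j : Fin d, i < j →
        |u (x + h • (e d i + e d j))| ≤ S ∧ |u (x - h • (e d i + e d j))| ≤ S ∧
        |u (x + h • (e d i - e d j))| ≤ S ∧ |u (x - h • (e d i - e d j))| ≤ S) := by
  set S1 : ℝ := ∑ i : Fin d, (|u (x + h • e d i)| + |u (x - h • e d i)|) with hS1
  set S2 : ℝ := ∑ i : Fin d, ∑ j ∈ Finset.univ.filter (fun j => i < j),
      (|u (x + h • (e d i + e d j))| + |u (x - h • (e d i + e d j))| +
       |u (x + h • (e d i - e d j))| + |u (x - h • (e d i - e d j))|) with hS2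
  have hS1nn : 0 ≤ S1 := Finset.sum_nonneg fun i _ => by positivity
  have hS2nn : 0 ≤ S2 := Finset.sum_nonneg fun i _ =>
    Finset.sum_nonneg fun j _ => by positivity
  refine ⟨|u x| + S1 + S2, by linarith, ?_, ?_⟩
  · intro i
    have h1 : |u (x + h • e d i)| + |u (x - h • e d i)| ≤ S1 :=
      Finset.single_le_sum (f := fun i => |u (x + h • e d i)| + |u (x - h • e d i)|)
        (fun i _ => by positivity) (Finset.mem_univ i)
    constructor <;> [skip; skip] <;>
      · have := abs_nonneg (u (x + h • e d i)); have := abs_nonneg (u (x - h • e d i))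
        have := abs_nonneg (u x); linarith
  · intro i j hij
    have h1 : (|u (x + h • (e d i + e d j))| + |u (x - h • (e d i + e d j))| +
        |u (x + h • (e d i - e d j))| + |u (x - h • (e d i - e d j))|) ≤
        ∑ j ∈ Finset.univ.filter (fun j => i < j),
          (|u (x + h • (e d i + e d j))| + |u (x - h • (e d i + e d j))| +
           |u (x + h • (e d i - e d j))| + |u (x - h • (e d i - e d j))|) :=
      Finset.single_le_sum (f := fun k =>
          |u (x + h • (e d i + e d k))| + |u (x - h • (e d i + e d k))| +
          |u (x + h • (e d i - e d k))| + |u (x - h • (e d i - e d k))|)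
        (fun k _ => by positivity)
        (Finset.mem_filter.mpr ⟨Finset.mem_univ j, hij⟩)
    have h2 : ∑ j ∈ Finset.univ.filter (fun j => i < j),
          (|u (x + h • (e d i + e d j))| + |u (x - h • (e d i + e d j))| +
           |u (x + h • (e d i - e d j))| + |u (x - h • (e d i - e d j))|) ≤ S2 :=
      Finset.single_le_sum
        (f := fun i => ∑ j ∈ Finset.univ.filter (fun j => i < j),
          (|u (x + h • (e d i + e d j))| + |u (x - h • (e d i + e d j))| +
           |u (x + h • (e d i - e d j))| + |u (x - h • (e d i - e d j))|))
        (fun i _ => Finset.sum_nonneg fun j _ => by positivity) (Finset.mem_univ i)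
    have h3 := abs_nonneg (u (x + h • (e d i + e d j)))
    have h4 := abs_nonneg (u (x - h • (e d i + e d j)))
    have h5 := abs_nonneg (u (x + h • (e d i - e d j)))
    have h6 := abs_nonneg (u (x - h • (e d i - e d j)))
    have h7 := abs_nonneg (u x)
    refine ⟨by linarith, by linarith, by linarith, by linarith⟩

end Aux

/-- Lipschitz continuity of the scheme for the pure degenerate
equation: there is `C > 0` depending only on `d, Λ, ε, h, θ, K_f` such that
`max |G_h(u,·) − G_h(v,·)| ≤ C max |u − v|` over the grid. -/
theorem scheme_lipschitz {d : ℕ} (hd : 1 ≤ d) (Lam h ε θ Kf : ℝ)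
    (hLam : 0 < Lam) (hh : 0 < h) (hε0 : 0 < ε) (hε1 : ε < 1) (hθ : 1 ≤ θ)
    (hKf : 0 ≤ Kf) :
    ∃ C : ℝ, 0 < C ∧
      ∀ (lam : ℝ), 0 < lam → lam ≤ Lam →
      ∀ (ιA ιB : Type) (_ : Nonempty ιA) (_ : Nonempty ιB)
        (A : ιA → ιB → Matrix (Fin d) (Fin d) ℝ), IsaacsData d lam Lam A →
      ∀ (G : Grid d h),
      ∀ (f : E d → ℝ), (∀ x ∈ G.interior, |f x| ≤ Kf) →
      ∀ (g : E d → ℝ),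
      ∀ (u v : E d → ℝ), ∀ x ∈ G.interior ∪ G.boundary,
        |scheme d ε θ A G f g u x - scheme d ε θ A G f g v x| ≤
          C * (G.interior ∪ G.boundary).sup' G.nonempty (fun y => |u y - v y|) := by
  classical
  set c0 : ℝ := Real.sqrt ε with hc0
  set KL : ℝ := (d + 2 * d ^ 2) * (Lam * (4 / h ^ 2)) with hKL
  set KF : ℝ := Kf * ((θ * c0 ^ (-θ - 1)) * (2 * d / h)) with hKFdef
  have hc0pos : 0 < c0 := Real.sqrt_pos.mpr hε0
  have hKLnn : 0 ≤ KL := by positivity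
  have hKFnn : 0 ≤ KF := by
    apply mul_nonneg hKf
    apply mul_nonneg (mul_nonneg (by linarith) (Real.rpow_pos_of_pos hc0pos _).le)
    positivity
  refine ⟨1 + ε + KL + KF, by linarith, ?_⟩
  intro lam hlam hlamLam ιA ιB hNA hNB A hIs G f hf g u v x hx
  haveI := hNA; haveI := hNB
  set M : ℝ := (G.interior ∪ G.boundary).sup' G.nonempty (fun y => |u y - v y|) with hMdef
  have hMmem : ∀ y ∈ G.interior ∪ G.boundary, |u y - v y| ≤ M :=
    fun y hy => Finset.le_sup' (fun y => |u y - v y|) hy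
  have hM0 : 0 ≤ M := le_trans (abs_nonneg _) (hMmem x hx)
  by_cases hxint : x ∈ G.interior
  · -- interior point
    have hmemax : ∀ i : Fin d, x + h • e d i ∈ G.interior ∪ G.boundary ∧
        x - h • e d i ∈ G.interior ∪ G.boundary := G.stencil_ax x hxint
    have hmemdiag := G.stencil_diag x hxint
    -- bounds on w := u - v at stencil points
    have hwx : |u x - v x| ≤ M := hMmem x hx
    have hw1 : ∀ i : Fin d, |u (x + h • e d i) - v (x + h • e d i)| ≤ M ∧
        |u (x - h • e d i) - v (x - h • e d i)| ≤ M :=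
      fun i => ⟨hMmem _ (hmemax i).1, hMmem _ (hmemax i).2⟩
    have hw2 : ∀ i j : Fin d, i < j →
        |u (x + h • (e d i + e d j)) - v (x + h • (e d i + e d j))| ≤ M ∧
        |u (x - h • (e d i + e d j)) - v (x - h • (e d i + e d j))| ≤ M ∧
        |u (x + h • (e d i - e d j)) - v (x + h • (e d i - e d j))| ≤ M ∧
        |u (x - h • (e d i - e d j)) - v (x - h • (e d i - e d j))| ≤ M := by
      intro i j hij
      obtain ⟨m1, m2, m3, m4⟩ := hmemdiag i j hij
      exact ⟨hMmem _ m1, hMmem _ m2, hMmem _ m3, hMmem _ m4⟩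
    have hLamnn : (0:ℝ) ≤ Lam := hLam.le
    -- Fh difference
    have hFh : |Fh d h A u x - Fh d h A v x| ≤ KL * M := by
      obtain ⟨Su, hSu0, hSu1, hSu2⟩ := stencil_bound_spec d h u x
      obtain ⟨Sv, hSv0, hSv1, hSv2⟩ := stencil_bound_spec d h v x
      set Bu : ℝ := (d + 2 * d ^ 2) * (Lam * (4 * Su / h ^ 2)) with hBu
      set Bv : ℝ := (d + 2 * d ^ 2) * (Lam * (4 * Sv / h ^ 2)) with hBv
      have key : |(⨆ a : ιA, ⨅ b : ιB, -(Lh d h (A a b) u x)) -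
          (⨆ a : ιA, ⨅ b : ιB, -(Lh d h (A a b) v x))| ≤ KL * M := by
        apply aux_supinf_lipschitz _ _ (KL * M) (max Bu Bv)
        · intro a b
          have hdd := (hIs a b).2.1
          have hdiag : ∀ i, A a b i i ≤ Lam := fun i => diag_le_of_psd (hIs a b).2.2.2 i
          have heq : -(Lh d h (A a b) u x) - -(Lh d h (A a b) v x) =
              -(Lh d h (A a b) (fun y => u y - v y) x) := by
            rw [← Lh_sub]; ring
          rw [heq, abs_neg]
          have := Lh_bound (A := A a b) (w := fun y => u y - v y) (x := x)
            hh hLamnn hdd hdiag hwx hw1 hw2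
          calc |Lh d h (A a b) (fun y => u y - v y) x|
              ≤ (d + 2 * d ^ 2) * (Lam * (4 * M / h ^ 2)) := this
            _ = KL * M := by rw [hKL]; ring
        · intro a b
          rw [abs_neg]
          refine le_trans (Lh_bound (A := A a b) hh hLamnn (hIs a b).2.1
            (fun i => diag_le_of_psd (hIs a b).2.2.2 i) hSu0 hSu1 hSu2) (le_max_left _ _)
        · intro a b
          rw [abs_neg]
          refine le_trans (Lh_bound (A := A a b) hh hLamnn (hIs a b).2.1
            (fun i => diag_le_of_psd (hIs a b).2.2.2 i) hSv0 hSv1 hSv2) (le_max_right _ _)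
      exact key
    -- the nonlinear forcing term
    set su := upwindSq d h u x with hsu'
    set sv := upwindSq d h v x with hsv'
    have hsu0 : 0 ≤ su := upwindSq_nonneg d hh u x
    have hsv0 : 0 ≤ sv := upwindSq_nonneg d hh v x
    set au := Real.sqrt (ε + su) with hau
    set av := Real.sqrt (ε + sv) with hav
    have hau0 : 0 ≤ au := Real.sqrt_nonneg _
    have hav0 : 0 ≤ av := Real.sqrt_nonneg _
    have hcau : c0 ≤ au := Real.sqrt_le_sqrt (by linarith)
    have hcav : c0 ≤ av := Real.sqrt_le_sqrt (by linarith)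
    have hconvu : (ε + su) ^ (θ / 2) = au ^ (θ:ℝ) := by
      rw [hau, Real.sqrt_eq_rpow, ← Real.rpow_mul (by linarith)]
      congr 1; ring
    have hconvv : (ε + sv) ^ (θ / 2) = av ^ (θ:ℝ) := by
      rw [hav, Real.sqrt_eq_rpow, ← Real.rpow_mul (by linarith)]
      congr 1; ring
    have hFdiff : f x / (ε + su) ^ (θ / 2) - f x / (ε + sv) ^ (θ / 2) =
        f x * (au ^ (-θ) - av ^ (-θ)) := by
      rw [hconvu, hconvv, div_eq_mul_inv, div_eq_mul_inv,
        ← Real.rpow_neg hau0, ← Real.rpow_neg hav0]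
      ring
    have hsqrtlip : |au - av| ≤ 2 * d * M / h :=
      sqrt_upwind_lip hh hε0 u v x hwx hw1
    have hrlip : |au ^ (-θ:ℝ) - av ^ (-θ:ℝ)| ≤ θ * c0 ^ (-θ - 1) * (2 * d * M / h) := by
      refine le_trans (aux_rpow_neg_lip hθ hc0pos hcau hcav) ?_
      have hpos : 0 ≤ θ * c0 ^ (-θ - 1 : ℝ) :=
        mul_nonneg (by linarith) (Real.rpow_pos_of_pos hc0pos _).le
      exact mul_le_mul_of_nonneg_left hsqrtlip hpos
    have hterm3 : |f x * (au ^ (-θ) - av ^ (-θ))| ≤ KF * M := by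
      rw [abs_mul]
      calc |f x| * |au ^ (-θ) - av ^ (-θ)|
          ≤ Kf * (θ * c0 ^ (-θ - 1) * (2 * d * M / h)) :=
            mul_le_mul (hf x hxint) hrlip (abs_nonneg _) hKf
        _ = KF * M := by rw [hKFdef]; field_simp
    -- assemble
    have hdecomp : scheme d ε θ A G f g u x - scheme d ε θ A G f g v x =
        ε * (u x - v x) + (Fh d h A u x - Fh d h A v x) -
          f x * (au ^ (-θ) - av ^ (-θ)) := by
      rw [scheme, scheme, if_pos hxint, if_pos hxint, ← hFdiff]
      ring
    rw [hdecomp]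
    have ht1 : |ε * (u x - v x)| ≤ ε * M := by
      rw [abs_mul, abs_of_pos hε0]
      exact mul_le_mul_of_nonneg_left hwx hε0.le
    calc |ε * (u x - v x) + (Fh d h A u x - Fh d h A v x) -
        f x * (au ^ (-θ) - av ^ (-θ))|
        ≤ |ε * (u x - v x) + (Fh d h A u x - Fh d h A v x)| +
          |f x * (au ^ (-θ) - av ^ (-θ))| := abs_sub _ _
      _ ≤ (|ε * (u x - v x)| + |Fh d h A u x - Fh d h A v x|) +
          |f x * (au ^ (-θ) - av ^ (-θ))| := by
            have := abs_add_le (ε * (u x - v x)) (Fh d h A u x - Fh d h A v x)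
            linarith
      _ ≤ ε * M + KL * M + KF * M := by linarith [ht1, hFh, hterm3]
      _ ≤ (1 + ε + KL + KF) * M := by
            have hexp : (1 + ε + KL + KF) * M = ε * M + KL * M + KF * M + M := by ring
            linarith [hM0, hexp]
  · -- boundary point
    rw [scheme, scheme, if_neg hxint, if_neg hxint]
    have : u x - g x - (v x - g x) = u x - v x := by ring
    rw [this]
    have h1 : |u x - v x| ≤ M := hMmem x hx
    have hexp : (1 + ε + KL + KF) * M = M + (ε + KL + KF) * M := by ring
    have h2 : 0 ≤ (ε + KL + KF) * M := mul_nonneg (by linarith) hM0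
    linarith


end Paper
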